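/- Fix an integer d ≥ 1. The growth constant μ(g) = lim_{n→∞} c_n^{DJ}(g)^{1/n} of the Domb–Joyce model converges, as g → ∞, to the connective constant μ = lim_{n→∞} c_n^{1/n} of the self-avoiding walk: lim_{g→∞} μ(g) = μ. -/

import Mathlib

/-!
Formalization of statements from "The strong interaction limit of
continuous-time weakly self-avoiding walk" by Brydges, Dahlqvist, Slade.

An `n`-step nearest-neighbour walk on `ℤ^d` starting at the origin is encoded
bijectively by its sequence of steps `s : Fin n → Fin d × Bool`, a step being a
coordinate direction together with a sign.
-/

open scoped BigOperators Topology
open Filter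

namespace StrongInteraction

/-- The unit step in coordinate direction `e.1`, with sign `e.2`. -/
def stepVec (d : ℕ) (e : Fin d × Bool) : Fin d → ℤ :=
  fun i => if i = e.1 then (if e.2 then 1 else -1) else 0

/-- `walkPos s k` is the position `Y_k` of the walk started at the origin whose
successive nearest-neighbour steps are given by `s`. -/
def walkPos {d n : ℕ} (s : Fin n → Fin d × Bool) (k : Fin (n + 1)) : Fin d → ℤ :=
  ∑ i ∈ Finset.univ.filter (fun i : Fin n => (i : ℕ) < (k : ℕ)), stepVec d (s i)

/-- `n_x(Y)`: the number of visits to `x` by the walk. -/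
def visits {d n : ℕ} (s : Fin n → Fin d × Bool) (x : Fin d → ℤ) : ℕ :=
  (Finset.univ.filter (fun k : Fin (n + 1) => walkPos s k = x)).card

/-- The set of distinct vertices visited by the walk. -/
def walkRange {d n : ℕ} (s : Fin n → Fin d × Bool) : Finset (Fin d → ℤ) :=
  Finset.image (walkPos s) Finset.univ

/-- A walk is self-avoiding when its positions are pairwise distinct. -/
def SelfAvoiding {d n : ℕ} (s : Fin n → Fin d × Bool) : Prop :=
  Function.Injective (walkPos s)

instance {d n : ℕ} (s : Fin n → Fin d × Bool) : Decidable (SelfAvoiding s) :=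
  inferInstanceAs (Decidable (Function.Injective (walkPos s)))

/-- `c_n`: the number of `n`-step self-avoiding walks. -/
def csaw (d n : ℕ) : ℕ :=
  (Finset.univ.filter fun s : Fin n → Fin d × Bool => SelfAvoiding s).card


/-- The Domb–Joyce weight `exp(-g Σ_{x∈ℤ^d} n_x(Y)(n_x(Y)-1))` of a walk.
(The sum over `x ∈ ℤ^d` reduces to the sum over the range of the walk, since
`n_x = 0` elsewhere.) -/
noncomputable def djWeight {d n : ℕ} (g : ℝ) (s : Fin n → Fin d × Bool) : ℝ :=
  Real.exp (-g * ∑ x ∈ walkRange s, (visits s x : ℝ) * ((visits s x : ℝ) - 1))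

/-- `c_n^{DJ}(g) = Σ_{Y ∈ W_n} exp(-g Σ_x n_x(Y)(n_x(Y)-1))`. -/
noncomputable def cDJ (d n : ℕ) (g : ℝ) : ℝ :=
  ∑ s : Fin n → Fin d × Bool, djWeight g s

/-! ### auxiliary -/

/-- Extension of the step sequence to `ℕ`, as vectors, zero beyond `n`. -/
def extStep {d n : ℕ} (s : Fin n → Fin d × Bool) : ℕ → (Fin d → ℤ) :=
  fun i => if h : i < n then stepVec d (s ⟨i, h⟩) else 0

/-- Position after `k` steps, for an `ℕ`-indexed step sequence. -/
def W {d : ℕ} (f : ℕ → (Fin d → ℤ)) (k : ℕ) : Fin d → ℤ :=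
  ∑ i ∈ Finset.range k, f i

lemma walkPos_eq {d n : ℕ} (s : Fin n → Fin d × Bool) (k : Fin (n + 1)) :
    walkPos s k = W (extStep s) (k : ℕ) := by
  have hk : (k : ℕ) ≤ n := Nat.lt_succ_iff.mp k.isLt
  rw [walkPos, Finset.sum_filter, W]
  have h1 : (∑ a : Fin n, if (a : ℕ) < (k : ℕ) then stepVec d (s a) else 0)
      = ∑ a : Fin n, (fun i : ℕ => if i < (k : ℕ) then extStep s i else 0) (a : ℕ) := by
    refine Finset.sum_congr rfl fun a _ => ?_
    simp only [extStep, a.isLt, dif_pos, Fin.eta]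
  have h2 := Fin.sum_univ_eq_sum_range (fun i : ℕ => if i < (k : ℕ) then extStep s i else 0) n
  rw [h1, h2, ← Finset.sum_filter]
  congr 1
  ext i
  simp only [Finset.mem_filter, Finset.mem_range]
  omega


lemma visits_eq {d n : ℕ} (s : Fin n → Fin d × Bool) (x : Fin d → ℤ) :
    visits s x = ((Finset.range (n + 1)).filter (fun k => W (extStep s) k = x)).card := by
  rw [visits, Finset.card_filter, Finset.card_filter]
  have h1 : (∑ k : Fin (n+1), if walkPos s k = x then 1 else 0)
      = ∑ k : Fin (n+1), (fun i : ℕ => if W (extStep s) i = x then 1 else 0) (k : ℕ) := by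
    refine Finset.sum_congr rfl fun k _ => ?_
    rw [walkPos_eq]
  have h2 := Fin.sum_univ_eq_sum_range (fun i : ℕ => if W (extStep s) i = x then (1:ℕ) else 0) (n+1)
  rw [h1, h2]

lemma mem_walkRange_iff {d n : ℕ} (s : Fin n → Fin d × Bool) (x : Fin d → ℤ) :
    x ∈ walkRange s ↔ ∃ k ≤ n, W (extStep s) k = x := by
  simp only [walkRange, Finset.mem_image, Finset.mem_univ, true_and]
  constructor
  · rintro ⟨k, rfl⟩
    exact ⟨(k : ℕ), Nat.lt_succ_iff.mp k.isLt, (walkPos_eq s k).symm⟩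
  · rintro ⟨k, hk, rfl⟩
    exact ⟨⟨k, Nat.lt_succ_of_le hk⟩, walkPos_eq s ⟨k, Nat.lt_succ_of_le hk⟩⟩

lemma extStep_append_lt {d n m : ℕ} (s : Fin n → Fin d × Bool) (t : Fin m → Fin d × Bool)
    {i : ℕ} (hi : i < n) : extStep (Fin.append s t) i = extStep s i := by
  have hi' : i < n + m := Nat.lt_of_lt_of_le hi (Nat.le_add_right n m)
  simp only [extStep, dif_pos hi, dif_pos hi']
  have : (⟨i, hi'⟩ : Fin (n + m)) = Fin.castAdd m ⟨i, hi⟩ := rfl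
  rw [this, Fin.append_left]

lemma extStep_append_ge {d n m : ℕ} (s : Fin n → Fin d × Bool) (t : Fin m → Fin d × Bool)
    (j : ℕ) : extStep (Fin.append s t) (n + j) = extStep t j := by
  by_cases hj : j < m
  · have hj' : n + j < n + m := by omega
    simp only [extStep, dif_pos hj, dif_pos hj']
    have : (⟨n + j, hj'⟩ : Fin (n + m)) = Fin.natAdd n ⟨j, hj⟩ := rfl
    rw [this, Fin.append_right]
  · have hj' : ¬ (n + j < n + m) := by omega
    simp only [extStep, dif_neg hj, dif_neg hj']

lemma W_append_le {d n m : ℕ} (s : Fin n → Fin d × Bool) (t : Fin m → Fin d × Bool)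
    {k : ℕ} (hk : k ≤ n) : W (extStep (Fin.append s t)) k = W (extStep s) k := by
  refine Finset.sum_congr rfl fun i hi => ?_
  exact extStep_append_lt s t (lt_of_lt_of_le (Finset.mem_range.mp hi) hk)

lemma W_append_add {d n m : ℕ} (s : Fin n → Fin d × Bool) (t : Fin m → Fin d × Bool)
    (j : ℕ) : W (extStep (Fin.append s t)) (n + j) = W (extStep s) n + W (extStep t) j := by
  rw [W, Finset.sum_range_add]
  congr 1
  · exact W_append_le s t le_rfl
  · exact Finset.sum_congr rfl fun i _ => extStep_append_ge s t i

lemma visits_append {d n m : ℕ} (s : Fin n → Fin d × Bool) (t : Fin m → Fin d × Bool)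
    (x : Fin d → ℤ) :
    visits (Fin.append s t) x + (if x = W (extStep s) n then 1 else 0)
      = visits s x + visits t (x - W (extStep s) n) := by
  set Y := W (extStep s) n with hY
  set F := extStep (Fin.append s t) with hF
  rw [visits_eq, visits_eq, visits_eq]
  rw [Finset.card_filter, Finset.card_filter, Finset.card_filter]
  -- split the big sum over range (n + m + 1)
  have hsplit : (∑ k ∈ Finset.range (n + m + 1), if W F k = x then 1 else 0)
      = (∑ k ∈ Finset.range (n + 1), if W F k = x then 1 else 0)
        + ∑ j ∈ Finset.range m, if W F (n + 1 + j) = x then 1 else 0 := by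
    have : n + m + 1 = (n + 1) + m := by omega
    rw [this, Finset.sum_range_add]
  rw [hsplit]
  have e1 : (∑ k ∈ Finset.range (n + 1), if W F k = x then 1 else 0)
      = ∑ k ∈ Finset.range (n + 1), if W (extStep s) k = x then 1 else 0 := by
    refine Finset.sum_congr rfl fun k hk => ?_
    rw [hF, W_append_le s t (Nat.lt_succ_iff.mp (Finset.mem_range.mp hk))]
  have e2 : (∑ j ∈ Finset.range m, if W F (n + 1 + j) = x then 1 else 0)
      = ∑ j ∈ Finset.range m, if W (extStep t) (j + 1) = x - Y then 1 else 0 := by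
    refine Finset.sum_congr rfl fun j hj => ?_
    have : n + 1 + j = n + (1 + j) := by omega
    rw [this, hF, W_append_add s t (1 + j), ← hY]
    have : (Y + W (extStep t) (1 + j) = x) ↔ (W (extStep t) (j + 1) = x - Y) := by
      rw [Nat.add_comm 1 j]
      constructor
      · intro h; rw [← h]; abel
      · intro h; rw [h]; abel
    simp only [this]
  have e3 : (∑ k ∈ Finset.range (m + 1), if W (extStep t) k = x - Y then 1 else 0)
      = (∑ j ∈ Finset.range m, if W (extStep t) (j + 1) = x - Y then 1 else 0)
        + if x = Y then 1 else 0 := by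
    rw [Finset.sum_range_succ']
    congr 1
    have h0 : W (extStep t) 0 = 0 := by simp [W]
    rw [h0]
    have : ((0 : Fin d → ℤ) = x - Y) ↔ (x = Y) := by
      constructor
      · intro h; have := h.symm; rwa [sub_eq_zero] at this
      · intro h; rw [h]; simp
    simp only [this]
  rw [e1, e2, e3]
  ring


/-- The interaction sum `Σ_x n_x(n_x-1)`. -/
noncomputable def Ssum {d n : ℕ} (s : Fin n → Fin d × Bool) : ℝ :=
  ∑ x ∈ walkRange s, (visits s x : ℝ) * ((visits s x : ℝ) - 1)

lemma djWeight_def {d n : ℕ} (g : ℝ) (s : Fin n → Fin d × Bool) :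
    djWeight g s = Real.exp (-g * Ssum s) := rfl

lemma term_nonneg (v : ℕ) : 0 ≤ (v : ℝ) * ((v : ℝ) - 1) := by
  rcases Nat.eq_zero_or_pos v with h | h
  · simp [h]
  · have : (1 : ℝ) ≤ (v : ℝ) := by exact_mod_cast h
    nlinarith

lemma visits_eq_zero_of_not_mem {d n : ℕ} (s : Fin n → Fin d × Bool) {x : Fin d → ℤ}
    (hx : x ∉ walkRange s) : visits s x = 0 := by
  rw [visits, Finset.card_eq_zero, Finset.filter_eq_empty_iff]
  intro k _
  intro h
  exact hx (Finset.mem_image.mpr ⟨k, Finset.mem_univ k, h⟩)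

lemma Ssum_nonneg {d n : ℕ} (s : Fin n → Fin d × Bool) : 0 ≤ Ssum s :=
  Finset.sum_nonneg fun x _ => term_nonneg _

lemma pointwise_ineq (N v w c : ℕ) (hc : N + c = v + w) (hc1 : c ≤ 1)
    (h1 : c = 1 → 1 ≤ v ∧ 1 ≤ w) :
    (v : ℝ) * ((v : ℝ) - 1) + (w : ℝ) * ((w : ℝ) - 1) ≤ (N : ℝ) * ((N : ℝ) - 1) := by
  interval_cases c
  · have hN : (N : ℝ) = (v : ℝ) + (w : ℝ) := by exact_mod_cast congrArg (Nat.cast : ℕ → ℝ) (by omega : N = v + w)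
    have : (0:ℝ) ≤ (v:ℝ) * (w:ℝ) := by positivity
    nlinarith
  · obtain ⟨hv, hw⟩ := h1 rfl
    have hv' : (1:ℝ) ≤ (v:ℝ) := by exact_mod_cast hv
    have hw' : (1:ℝ) ≤ (w:ℝ) := by exact_mod_cast hw
    have hN : (N : ℝ) = (v : ℝ) + (w : ℝ) - 1 := by
      have : N = v + w - 1 := by omega
      have : N + 1 = v + w := by omega
      have := congrArg (Nat.cast : ℕ → ℝ) this
      push_cast at this
      linarith
    nlinarith [mul_nonneg (sub_nonneg.mpr hv') (sub_nonneg.mpr hw')]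

lemma Ssum_append {d n m : ℕ} (s : Fin n → Fin d × Bool) (t : Fin m → Fin d × Bool) :
    Ssum s + Ssum t ≤ Ssum (Fin.append s t) := by
  set Y := W (extStep s) n with hY
  set u := Fin.append s t with hu
  -- pointwise bound on the range of u
  have key : ∀ x ∈ walkRange u,
      (visits s x : ℝ) * ((visits s x : ℝ) - 1)
        + (visits t (x - Y) : ℝ) * ((visits t (x - Y) : ℝ) - 1)
      ≤ (visits u x : ℝ) * ((visits u x : ℝ) - 1) := by
    intro x _
    refine pointwise_ineq _ _ _ (if x = Y then 1 else 0) (visits_append s t x) ?_ ?_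
    · split <;> omega
    · intro hc
      have hx : x = Y := by by_contra h; simp [h] at hc
      constructor
      · rw [visits_eq]
        have : n ∈ (Finset.range (n+1)).filter (fun k => W (extStep s) k = x) := by
          simp [Finset.mem_filter, hx, hY]
        exact Finset.card_pos.mpr ⟨n, this⟩
      · rw [visits_eq]
        have h0 : W (extStep t) 0 = 0 := by simp [W]
        have : 0 ∈ (Finset.range (m+1)).filter (fun k => W (extStep t) k = x - Y) := by
          simp [Finset.mem_filter, h0, hx]
        exact Finset.card_pos.mpr ⟨0, this⟩
  have hsum : (∑ x ∈ walkRange u, ((visits s x : ℝ) * ((visits s x : ℝ) - 1)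
        + (visits t (x - Y) : ℝ) * ((visits t (x - Y) : ℝ) - 1)))
      ≤ Ssum u := Finset.sum_le_sum key
  rw [Finset.sum_add_distrib] at hsum
  refine le_trans (add_le_add ?_ ?_) hsum
  · -- Ssum s ≤ sum over walkRange u
    refine Finset.sum_le_sum_of_subset_of_nonneg ?_ (fun x _ _ => term_nonneg _)
    intro x hx
    rw [mem_walkRange_iff] at hx ⊢
    obtain ⟨k, hk, hkx⟩ := hx
    exact ⟨k, by omega, by rw [hu, W_append_le s t hk, hkx]⟩
  · -- Ssum t ≤ shifted sum over walkRange u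
    have himg : Finset.image (fun y => Y + y) (walkRange t) ⊆ walkRange u := by
      intro x hx
      obtain ⟨y, hy, rfl⟩ := Finset.mem_image.mp hx
      rw [mem_walkRange_iff] at hy ⊢
      obtain ⟨k, hk, hky⟩ := hy
      exact ⟨n + k, by omega, by rw [hu, W_append_add s t k, hky, hY]⟩
    have heq : Ssum t = ∑ x ∈ Finset.image (fun y => Y + y) (walkRange t),
        (visits t (x - Y) : ℝ) * ((visits t (x - Y) : ℝ) - 1) := by
      rw [Finset.sum_image (by intro a _ b _ h; exact add_left_cancel h)]
      refine Finset.sum_congr rfl fun y _ => ?_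
      simp
    rw [heq]
    exact Finset.sum_le_sum_of_subset_of_nonneg himg (fun x _ _ => term_nonneg _)

lemma djWeight_append {d n m : ℕ} {g : ℝ} (hg : 0 ≤ g) (s : Fin n → Fin d × Bool)
    (t : Fin m → Fin d × Bool) :
    djWeight g (Fin.append s t) ≤ djWeight g s * djWeight g t := by
  rw [djWeight_def, djWeight_def, djWeight_def, ← Real.exp_add]
  apply Real.exp_le_exp.mpr
  have := Ssum_append s t
  nlinarith

lemma cDJ_submul {g : ℝ} (hg : 0 ≤ g) (d n m : ℕ) :
    cDJ d (n + m) g ≤ cDJ d n g * cDJ d m g := by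
  rw [cDJ, ← Equiv.sum_comp (Fin.appendEquiv n m) (djWeight g)]
  have : cDJ d n g * cDJ d m g
      = ∑ p : (Fin n → Fin d × Bool) × (Fin m → Fin d × Bool), djWeight g p.1 * djWeight g p.2 := by
    rw [cDJ, cDJ, Finset.sum_mul_sum, ← Finset.sum_product', Finset.univ_product_univ]
  rw [this]
  refine Finset.sum_le_sum fun p _ => ?_
  exact djWeight_append hg p.1 p.2


lemma djWeight_pos {d n : ℕ} (g : ℝ) (s : Fin n → Fin d × Bool) : 0 < djWeight g s :=
  Real.exp_pos _

lemma cDJ_pos {d : ℕ} (hd : 1 ≤ d) (n : ℕ) (g : ℝ) : 0 < cDJ d n g := by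
  have : Nonempty (Fin d × Bool) := by
    have : 0 < d := hd
    exact ⟨⟨⟨0, this⟩, true⟩⟩
  exact Finset.sum_pos (fun s _ => djWeight_pos g s) Finset.univ_nonempty

lemma Ssum_eq_zero {d n : ℕ} {s : Fin n → Fin d × Bool} (hs : SelfAvoiding s) :
    Ssum s = 0 := by
  refine Finset.sum_eq_zero fun x hx => ?_
  have h1 : visits s x ≤ 1 := by
    rw [visits]
    by_contra h
    push_neg at h
    obtain ⟨a, ha, b, hb, hab⟩ := Finset.one_lt_card.mp h
    simp only [Finset.mem_filter] at ha hb
    exact hab (hs (ha.2.trans hb.2.symm))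
  interval_cases h : visits s x <;> simp [h]

lemma two_le_Ssum {d n : ℕ} {s : Fin n → Fin d × Bool} (hs : ¬ SelfAvoiding s) :
    2 ≤ Ssum s := by
  rw [SelfAvoiding, Function.not_injective_iff] at hs
  obtain ⟨a, b, hab, hne⟩ := hs
  set x := walkPos s a with hx
  have hmem : x ∈ walkRange s := Finset.mem_image.mpr ⟨a, Finset.mem_univ a, rfl⟩
  have h2 : 2 ≤ visits s x := by
    rw [visits]
    refine Finset.one_lt_card.mpr ⟨a, ?_, b, ?_, hne⟩
    · simp [Finset.mem_filter, hx]
    · simp [Finset.mem_filter, hab.symm]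
  have h2' : (2 : ℝ) ≤ (visits s x : ℝ) := by exact_mod_cast h2
  have hterm : (2 : ℝ) ≤ (visits s x : ℝ) * ((visits s x : ℝ) - 1) := by nlinarith
  have hrest : (0 : ℝ) ≤ ∑ y ∈ (walkRange s).erase x,
      (visits s y : ℝ) * ((visits s y : ℝ) - 1) :=
    Finset.sum_nonneg fun y _ => term_nonneg _
  rw [Ssum, ← Finset.add_sum_erase _ _ hmem]
  linarith

lemma csaw_le_cDJ {g : ℝ} (hg : 0 ≤ g) (d n : ℕ) : (csaw d n : ℝ) ≤ cDJ d n g := by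
  rw [csaw, cDJ, Finset.card_filter]
  push_cast
  refine Finset.sum_le_sum fun s _ => ?_
  by_cases hs : SelfAvoiding s
  · simp only [hs, if_pos]
    rw [djWeight_def, Ssum_eq_zero hs]
    simp
  · simp only [hs, if_neg, if_false]
    exact le_of_lt (djWeight_pos g s)

lemma cDJ_le {g : ℝ} (hg : 0 ≤ g) (d n : ℕ) :
    cDJ d n g ≤ (csaw d n : ℝ)
      + ((Finset.univ.filter fun s : Fin n → Fin d × Bool => ¬ SelfAvoiding s).card : ℝ)
        * Real.exp (-(2 * g)) := by
  rw [cDJ, ← Finset.sum_filter_add_sum_filter_not Finset.univ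
    (fun s : Fin n → Fin d × Bool => SelfAvoiding s) (djWeight g)]
  have h1 : (∑ s ∈ Finset.univ.filter (fun s : Fin n → Fin d × Bool => SelfAvoiding s),
      djWeight g s) = (csaw d n : ℝ) := by
    rw [csaw]
    rw [Finset.sum_congr rfl (fun s hs => ?_), Finset.sum_const, nsmul_eq_mul, mul_one]
    have hs' := (Finset.mem_filter.mp hs).2
    rw [djWeight_def, Ssum_eq_zero hs']
    simp
  have h2 : (∑ s ∈ Finset.univ.filter (fun s : Fin n → Fin d × Bool => ¬ SelfAvoiding s),
      djWeight g s) ≤ ((Finset.univ.filter fun s : Fin n → Fin d × Bool => ¬ SelfAvoiding s).card : ℝ)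
        * Real.exp (-(2 * g)) := by
    rw [← nsmul_eq_mul, ← Finset.sum_const]
    refine Finset.sum_le_sum fun s hs => ?_
    have hs' := (Finset.mem_filter.mp hs).2
    rw [djWeight_def]
    apply Real.exp_le_exp.mpr
    have := two_le_Ssum hs'
    nlinarith
  linarith

lemma tendsto_cDJ (d n : ℕ) : Tendsto (fun g => cDJ d n g) atTop (𝓝 (csaw d n : ℝ)) := by
  have hexp : Tendsto (fun g : ℝ => (((Finset.univ.filter
      fun s : Fin n → Fin d × Bool => ¬ SelfAvoiding s).card : ℝ)) * Real.exp (-(2 * g)))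
      atTop (𝓝 0) := by
    rw [show (0:ℝ) = ((Finset.univ.filter fun s : Fin n → Fin d × Bool =>
      ¬ SelfAvoiding s).card : ℝ) * 0 by ring]
    apply Tendsto.const_mul
    apply Real.tendsto_exp_atBot.comp
    apply tendsto_neg_atBot_iff.mpr
    exact (tendsto_const_mul_atTop_of_pos (by norm_num : (0:ℝ) < 2)).mpr tendsto_id
  have hupper : Tendsto (fun g : ℝ => (csaw d n : ℝ)
      + ((Finset.univ.filter fun s : Fin n → Fin d × Bool => ¬ SelfAvoiding s).card : ℝ)
        * Real.exp (-(2 * g))) atTop (𝓝 ((csaw d n : ℝ) + 0)) :=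
    tendsto_const_nhds.add hexp
  rw [add_zero] at hupper
  refine tendsto_of_tendsto_of_tendsto_of_le_of_le' tendsto_const_nhds hupper ?_ ?_
  · filter_upwards [eventually_ge_atTop (0:ℝ)] with g hg
    exact csaw_le_cDJ hg d n
  · filter_upwards [eventually_ge_atTop (0:ℝ)] with g hg
    exact cDJ_le hg d n


lemma cDJ_pow_le {g : ℝ} (hg : 0 ≤ g) {d : ℕ} (hd : 1 ≤ d) (n : ℕ) :
    ∀ k : ℕ, 1 ≤ k → cDJ d (n * k) g ≤ (cDJ d n g) ^ k := by
  intro k hk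
  induction k with
  | zero => omega
  | succ k ih =>
    rcases Nat.eq_zero_or_pos k with h | h
    · subst h; simpa using le_rfl
    · have h1 : cDJ d (n * (k + 1)) g ≤ cDJ d (n * k) g * cDJ d n g := by
        have : n * (k + 1) = n * k + n := by ring
        rw [this]
        exact cDJ_submul hg d (n * k) n
      calc cDJ d (n * (k + 1)) g ≤ cDJ d (n * k) g * cDJ d n g := h1
        _ ≤ (cDJ d n g) ^ k * cDJ d n g := by
            exact mul_le_mul_of_nonneg_right (ih h) (le_of_lt (cDJ_pos hd n g))
        _ = (cDJ d n g) ^ (k + 1) := by ring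

lemma mu_le_rpow {g : ℝ} (hg : 0 < g) {d : ℕ} (hd : 1 ≤ d) {L : ℝ}
    (htend : Tendsto (fun n : ℕ => (cDJ d n g) ^ ((n : ℝ)⁻¹)) atTop (𝓝 L))
    {n : ℕ} (hn : 1 ≤ n) : L ≤ (cDJ d n g) ^ ((n : ℝ)⁻¹) := by
  set A := cDJ d n g with hA
  have hApos : 0 < A := cDJ_pos hd n g
  have hcomp : Tendsto (fun k : ℕ => (cDJ d (n * k) g) ^ (((n * k : ℕ) : ℝ)⁻¹))
      atTop (𝓝 L) := by
    refine htend.comp ?_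
    refine tendsto_atTop_atTop.mpr fun b => ⟨b, fun k hk => ?_⟩
    calc b ≤ k := hk
      _ ≤ n * k := Nat.le_mul_of_pos_left k (by omega)
  refine le_of_tendsto hcomp ?_
  filter_upwards [eventually_ge_atTop 1] with k hk
  have h1 : cDJ d (n * k) g ≤ A ^ k := cDJ_pow_le hg.le hd n k hk
  have h2 : (cDJ d (n * k) g) ^ (((n * k : ℕ) : ℝ)⁻¹) ≤ (A ^ k) ^ (((n * k : ℕ) : ℝ)⁻¹) :=
    Real.rpow_le_rpow (le_of_lt (cDJ_pos hd (n * k) g)) h1 (by positivity)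
  refine h2.trans_eq ?_
  rw [← Real.rpow_natCast A k, ← Real.rpow_mul hApos.le]
  congr 1
  have hnk : ((n * k : ℕ) : ℝ) = (n : ℝ) * (k : ℝ) := by push_cast; ring
  rw [hnk]
  have hn0 : (n : ℝ) ≠ 0 := by positivity
  have hk0 : (k : ℝ) ≠ 0 := by
    have : 0 < k := hk
    positivity
  field_simp

/-- the growth constant `μ(g)` of the Domb–Joyce model converges,
as `g → ∞`, to the connective constant `μ` of the self-avoiding walk. -/
theorem growth_constant_tendsto_connective_constant (d : ℕ) (hd : 1 ≤ d)
    (mu : ℝ → ℝ) (muSAW : ℝ)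
    (hmu : ∀ g : ℝ, 0 < g →
      Tendsto (fun n : ℕ => (cDJ d n g) ^ ((n : ℝ)⁻¹)) atTop (𝓝 (mu g)))
    (hmuSAW : Tendsto (fun n : ℕ => ((csaw d n : ℝ)) ^ ((n : ℝ)⁻¹)) atTop (𝓝 muSAW)) :
    Tendsto mu atTop (𝓝 muSAW) := by
  have hlow : ∀ g : ℝ, 0 < g → muSAW ≤ mu g := by
    intro g hg
    refine le_of_tendsto_of_tendsto' hmuSAW (hmu g hg) fun n => ?_
    exact Real.rpow_le_rpow (Nat.cast_nonneg _) (csaw_le_cDJ hg.le d n) (by positivity)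
  rw [Metric.tendsto_atTop]
  intro ε hε
  -- choose a good n
  obtain ⟨N₀, hN₀⟩ := Metric.tendsto_atTop.mp hmuSAW (ε / 2) (by linarith)
  set n := max N₀ 1 with hn
  have hn1 : 1 ≤ n := le_max_right _ _
  have hcs : ((csaw d n : ℝ)) ^ ((n : ℝ)⁻¹) < muSAW + ε := by
    have := hN₀ n (le_max_left _ _)
    rw [Real.dist_eq, abs_lt] at this
    linarith [this.2]
  -- cDJ (n, g) ^ (1/n) tends to csaw^(1/n) as g → ∞
  have hT : Tendsto (fun g : ℝ => (cDJ d n g) ^ ((n : ℝ)⁻¹)) atTop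
      (𝓝 (((csaw d n : ℝ)) ^ ((n : ℝ)⁻¹))) := by
    exact (Real.continuousAt_rpow_const _ _ (Or.inr (by positivity))).tendsto.comp
      (tendsto_cDJ d n)
  obtain ⟨G, hG⟩ := (hT.eventually_lt_const hcs).exists_forall_of_atTop
  refine ⟨max G 1, fun g hg => ?_⟩
  have hg1 : (1 : ℝ) ≤ g := le_trans (le_max_right _ _) hg
  have hgpos : 0 < g := by linarith
  have hub : mu g < muSAW + ε := by
    have h1 : mu g ≤ (cDJ d n g) ^ ((n : ℝ)⁻¹) :=
      mu_le_rpow hgpos hd (hmu g hgpos) hn1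
    have h2 := hG g (le_trans (le_max_left _ _) hg)
    linarith
  have hlb := hlow g hgpos
  rw [Real.dist_eq, abs_lt]
  constructor <;> linarith
end StrongInteraction
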